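/- For the naturally induced almost contact metric structure (φ, ξ, η, g) on M_r with φX = JX - η(X)ν, at any point with x₁ ≠ 0 one has g(X₁,₂, φX₁,₃) = -x₁(x₁² + x₂² + x₃²) ≠ 0 while dη(X₁,₂, X₁,₃) = 0, where X₁,₂ = -x₂∂₁ + x₁∂₂ and X₁,₃ = -x₃∂₁ + x₁∂₃; hence (M_r, φ, ξ, η, g) is not a contact metric manifold for any r ∈ (-1,1). -/

import Mathlib

/- Common setup: ℝ⁷ ≅ pure imaginary octonions 𝔆₊ (0-based indices: eᵢ ↦ i-1),
   octonion cross product x × y = xy + ⟨x,y⟩·1 given by the Fano triples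
   (e₁e₂=e₃, e₁e₄=e₅, e₁e₆=e₇, e₂e₅=e₇, e₃e₄=e₇, e₃e₅=e₆, e₂e₆=e₄),
   the hypersurfaces M_r = S⁶ ∩ {x₇ = r}, the unit normal ν of M_r in S⁶,
   the vector field ξ = -N × ν, its dual 1-form η and dη
   (with the convention dη(X,Y) = ½(Xη(Y) - Yη(X) - η([X,Y]))). -/

noncomputable section

open scoped RealInnerProductSpace

abbrev E7 : Type := EuclideanSpace ℝ (Fin 7)
abbrev E6 : Type := EuclideanSpace ℝ (Fin 6)

/-- Octonion cross product on pure imaginary octonions 𝔆₊ ≅ ℝ⁷. -/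
def cross (u v : E7) : E7 := WithLp.toLp 2 fun k =>
  if k = 0 then u 1 * v 2 - u 2 * v 1 + (u 3 * v 4 - u 4 * v 3) + (u 5 * v 6 - u 6 * v 5)
  else if k = 1 then u 2 * v 0 - u 0 * v 2 + (u 4 * v 6 - u 6 * v 4) + (u 5 * v 3 - u 3 * v 5)
  else if k = 2 then u 0 * v 1 - u 1 * v 0 + (u 3 * v 6 - u 6 * v 3) + (u 4 * v 5 - u 5 * v 4)
  else if k = 3 then u 4 * v 0 - u 0 * v 4 + (u 6 * v 2 - u 2 * v 6) + (u 1 * v 5 - u 5 * v 1)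
  else if k = 4 then u 0 * v 3 - u 3 * v 0 + (u 6 * v 1 - u 1 * v 6) + (u 5 * v 2 - u 2 * v 5)
  else if k = 5 then u 6 * v 0 - u 0 * v 6 + (u 2 * v 4 - u 4 * v 2) + (u 3 * v 1 - u 1 * v 3)
  else u 0 * v 5 - u 5 * v 0 + (u 1 * v 4 - u 4 * v 1) + (u 2 * v 3 - u 3 * v 2)

/-- The hypersurface M_r = S⁶ ∩ {x₇ = r} = {Σᵢ₌₁⁶ xᵢeᵢ + re₇ : Σᵢ₌₁⁶ xᵢ² = 1 - r²}. -/
def Mr (r : ℝ) : Set E7 := {x | x 6 = r ∧ ∑ i : Fin 6, x i.castSucc ^ 2 = 1 - r ^ 2}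

/-- The unit normal ν of M_r in S⁶ : ν_x = (r/√(1-r²)) Σᵢ₌₁⁶ xᵢeᵢ - √(1-r²) e₇. -/
def nu (r : ℝ) (x : E7) : E7 := WithLp.toLp 2 fun i =>
  if i = 6 then -Real.sqrt (1 - r ^ 2) else (r / Real.sqrt (1 - r ^ 2)) * x i

/-- ξ = -N × ν = (1/√(1-r²))(x₆e₁ + x₅e₂ + x₄e₃ - x₃e₄ - x₂e₅ - x₁e₆). -/
def xi (r : ℝ) (x : E7) : E7 := WithLp.toLp 2 fun i =>
  (1 / Real.sqrt (1 - r ^ 2)) *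
    (if i = 0 then x 5 else if i = 1 then x 4 else if i = 2 then x 3
     else if i = 3 then -x 2 else if i = 4 then -x 1 else if i = 5 then -x 0 else 0)

/-- The 1-form η dual to ξ:
η = (1/√(1-r²))(x₆dx₁ + x₅dx₂ + x₄dx₃ - x₃dx₄ - x₂dx₅ - x₁dx₆). -/
def eta (r : ℝ) (x v : E7) : ℝ :=
  (1 / Real.sqrt (1 - r ^ 2)) *
    (x 5 * v 0 + x 4 * v 1 + x 3 * v 2 - x 2 * v 3 - x 1 * v 4 - x 0 * v 5)

/-- dη = -(2/√(1-r²))(dx₁∧dx₆ + dx₂∧dx₅ + dx₃∧dx₄), with the convention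
dη(X,Y) = ½(Xη(Y) - Yη(X) - η([X,Y])), i.e. (dxᵢ∧dxⱼ)(u,v) = ½(uᵢvⱼ - uⱼvᵢ). -/
def deta (r : ℝ) (u v : E7) : ℝ :=
  -(1 / Real.sqrt (1 - r ^ 2)) *
    (u 0 * v 5 - u 5 * v 0 + (u 1 * v 4 - u 4 * v 1) + (u 2 * v 3 - u 3 * v 2))

/-- The tangent space T_xM_r = {v : v₇ = 0, ⟨v,x⟩ = 0} (as a predicate). -/
def TangentMr (x v : E7) : Prop := v 6 = 0 ∧ ⟪v, x⟫ = 0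

/-- The naturally induced almost contact structure tensor:
φX = JX - η(X)ν, where J_x v = x × v (for v tangent to S⁶). -/
def phi (r : ℝ) (x v : E7) : E7 := cross x v - eta r x v • nu r x

def X12 (x : E7) : E7 := WithLp.toLp 2 fun i => if i = 0 then -x 1 else if i = 1 then x 0 else 0
def X13 (x : E7) : E7 := WithLp.toLp 2 fun i => if i = 0 then -x 2 else if i = 2 then x 0 else 0


lemma inner_phi_eq (r : ℝ) (x : E7) :
    ⟪X12 x, phi r x (X13 x)⟫ = -(x 0) * ((x 0) ^ 2 + (x 1) ^ 2 + (x 2) ^ 2) := by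
  simp only [PiLp.inner_apply, RCLike.inner_apply, starRingEnd_apply, star_trivial,
    Fin.sum_univ_seven, phi, cross, eta, nu, X12, X13, PiLp.sub_apply, PiLp.smul_apply,
    smul_eq_mul, WithLp.ofLp_toLp]
  simp only [Fin.reduceEq, reduceIte, ite_true]
  ring

lemma deta_eq_zero (r : ℝ) (x : E7) : deta r (X12 x) (X13 x) = 0 := by
  simp only [deta, X12, X13, Fin.reduceEq, reduceIte, WithLp.ofLp_toLp]
  ring

lemma inner_X_x (x : E7) : ⟪X12 x, x⟫ = 0 ∧ ⟪X13 x, x⟫ = 0 := by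
  constructor <;>
  · simp only [PiLp.inner_apply, RCLike.inner_apply, starRingEnd_apply, star_trivial,
      Fin.sum_univ_seven, X12, X13, Fin.reduceEq, reduceIte, ite_true, WithLp.ofLp_toLp]
    ring

/-- for the naturally induced almost contact metric structure
(φ, ξ, η, g) on M_r, at any point with x₁ ≠ 0 one has
g(X₁,₂, φX₁,₃) = -x₁(x₁² + x₂² + x₃²) ≠ 0 while dη(X₁,₂, X₁,₃) = 0; hence
(M_r, φ, ξ, η, g) is not a contact metric manifold for any r ∈ (-1,1). -/
theorem stmt12 (r : ℝ) (hr : -1 < r ∧ r < 1) (x : E7) (hx : x ∈ Mr r)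
    (h1 : x 0 ≠ 0) :
    ⟪X12 x, phi r x (X13 x)⟫ = -(x 0) * ((x 0) ^ 2 + (x 1) ^ 2 + (x 2) ^ 2) ∧
    -(x 0) * ((x 0) ^ 2 + (x 1) ^ 2 + (x 2) ^ 2) ≠ 0 ∧
    deta r (X12 x) (X13 x) = 0 ∧
    deta r (X12 x) (X13 x) ≠ ⟪X12 x, phi r x (X13 x)⟫ ∧
    ∀ r' : ℝ, -1 < r' → r' < 1 → ∃ y ∈ Mr r', ∃ u v : E7,
      TangentMr y u ∧ TangentMr y v ∧ deta r' u v ≠ ⟪u, phi r' y v⟫ := by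
  have h2 : -(x 0) * ((x 0) ^ 2 + (x 1) ^ 2 + (x 2) ^ 2) ≠ 0 := by
    have : (x 0) ^ 2 + (x 1) ^ 2 + (x 2) ^ 2 > 0 := by positivity
    intro h; rcases mul_eq_zero.1 h with h' | h'
    · exact h1 (by linarith [neg_eq_zero.1 h'])
    · linarith
  refine ⟨inner_phi_eq r x, h2, deta_eq_zero r x, ?_, ?_⟩
  · rw [deta_eq_zero r x, inner_phi_eq r x]; exact fun h => h2 h.symm
  · intro r' hr1 hr2
    have hs : (0:ℝ) < 1 - r' ^ 2 := by nlinarith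
    set c := Real.sqrt (1 - r' ^ 2) with hc
    have hcpos : 0 < c := Real.sqrt_pos.2 hs
    have hcsq : c ^ 2 = 1 - r' ^ 2 := Real.sq_sqrt hs.le
    set y : E7 := WithLp.toLp 2 (fun i => if i = 0 then c else if i = 6 then r' else 0 : Fin 7 → ℝ) with hy
    have hy0 : y 0 = c := by simp [hy]
    have hy1 : y 1 = 0 := by simp [hy]
    have hy2 : y 2 = 0 := by simp [hy]
    refine ⟨y, ⟨by simp [hy], ?_⟩, X12 y, X13 y, ⟨by simp [X12], (inner_X_x y).1⟩,
      ⟨by simp [X13], (inner_X_x y).2⟩, ?_⟩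
    · simp (config := { decide := true }) [hy, Fin.sum_univ_six]
      linarith [hcsq]
    · rw [deta_eq_zero r' y, inner_phi_eq r' y, hy0, hy1, hy2]
      intro h
      have : c ^ 3 = 0 := by nlinarith [h]
      exact absurd (pow_eq_zero_iff (by norm_num) |>.1 this) hcpos.ne'
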